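/- Assume n = |p₁q₂ − p₂q₁| ≠ 0. Then the index in (ℤ × ℤ)/Λ of the cyclic subgroup generated by the image of (1, 0) equals gcd(|q₁|, |q₂|). (In the language of the paper: the permutation induced by the translation u on the n points of the fundamental region has exactly μ_q = gcd(|q₁|, |q₂|) cycles.) -/

import Mathlib

/-- The key subgroup computation: `ℤ(1,0) ⊔ Λ = ℤ × gcd(q₁,q₂)ℤ`. -/
lemma sup_eq (p₁ q₁ p₂ q₂ : ℤ) :
    AddSubgroup.zmultiples ((1, 0) : ℤ × ℤ) ⊔
      AddSubgroup.closure {((p₁, q₁) : ℤ × ℤ), (p₂, q₂)}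
      = (⊤ : AddSubgroup ℤ).prod (AddSubgroup.zmultiples (Int.gcd q₁ q₂ : ℤ)) := by
  apply le_antisymm
  · apply sup_le
    · apply AddSubgroup.zmultiples_le_of_mem
      simp [AddSubgroup.mem_prod, Int.mem_zmultiples_iff]
    · rw [AddSubgroup.closure_le]
      rintro x (rfl | rfl) <;>
        simp [AddSubgroup.mem_prod, Int.mem_zmultiples_iff, Int.gcd_dvd_left,
          Int.gcd_dvd_right]
  · rintro ⟨a, b⟩ hab
    rw [AddSubgroup.mem_prod] at hab
    obtain ⟨-, k, hk⟩ := hab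
    simp only [zsmul_eq_mul] at hk
    have hg : (Int.gcd q₁ q₂ : ℤ) = q₁ * Int.gcdA q₁ q₂ + q₂ * Int.gcdB q₁ q₂ :=
      Int.gcd_eq_gcd_ab q₁ q₂
    -- (a,b) = (a - k*(p₁*A + p₂*B)) • (1,0) + (k*A) • (p₁,q₁) + (k*B) • (p₂,q₂)
    have h1 : ((1, 0) : ℤ × ℤ) ∈
        AddSubgroup.zmultiples ((1, 0) : ℤ × ℤ) ⊔
          AddSubgroup.closure {((p₁, q₁) : ℤ × ℤ), (p₂, q₂)} :=
      AddSubgroup.mem_sup_left (AddSubgroup.mem_zmultiples _)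
    have h2 : ((p₁, q₁) : ℤ × ℤ) ∈
        AddSubgroup.zmultiples ((1, 0) : ℤ × ℤ) ⊔
          AddSubgroup.closure {((p₁, q₁) : ℤ × ℤ), (p₂, q₂)} :=
      AddSubgroup.mem_sup_right (AddSubgroup.subset_closure (by simp))
    have h3 : ((p₂, q₂) : ℤ × ℤ) ∈
        AddSubgroup.zmultiples ((1, 0) : ℤ × ℤ) ⊔
          AddSubgroup.closure {((p₁, q₁) : ℤ × ℤ), (p₂, q₂)} :=
      AddSubgroup.mem_sup_right (AddSubgroup.subset_closure (by simp))
    have key : ((a, b) : ℤ × ℤ) =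
        (a - k * (p₁ * Int.gcdA q₁ q₂ + p₂ * Int.gcdB q₁ q₂)) • ((1, 0) : ℤ × ℤ)
          + (k * Int.gcdA q₁ q₂) • ((p₁, q₁) : ℤ × ℤ)
          + (k * Int.gcdB q₁ q₂) • ((p₂, q₂) : ℤ × ℤ) := by
      simp only [Prod.smul_mk, smul_eq_mul, Prod.mk_add_mk, Prod.mk.injEq]
      constructor
      · ring
      · rw [← hk, hg]; push_cast; ring
    rw [key]
    exact AddSubgroup.add_mem _ (AddSubgroup.add_mem _ (AddSubgroup.zsmul_mem _ h1 _)
      (AddSubgroup.zsmul_mem _ h2 _)) (AddSubgroup.zsmul_mem _ h3 _)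

/-- Let `Λ ≤ ℤ × ℤ` be generated by `(p₁, q₁)` and `(p₂, q₂)`, and assume
`n = |p₁q₂ − p₂q₁| ≠ 0`.  Then the index in `(ℤ × ℤ)/Λ` of the cyclic subgroup
generated by the image of `(1, 0)` equals `gcd(|q₁|, |q₂|)`. -/
theorem stmt6 (p₁ q₁ p₂ q₂ : ℤ) (hn : p₁ * q₂ - p₂ * q₁ ≠ 0) :
    (AddSubgroup.zmultiples ((QuotientAddGroup.mk ((1, 0) : ℤ × ℤ)) :
        (ℤ × ℤ) ⧸ AddSubgroup.closure {((p₁, q₁) : ℤ × ℤ), (p₂, q₂)})).index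
      = Nat.gcd q₁.natAbs q₂.natAbs := by
  set Λ := AddSubgroup.closure {((p₁, q₁) : ℤ × ℤ), (p₂, q₂)}
  have hmap : AddSubgroup.zmultiples ((QuotientAddGroup.mk ((1, 0) : ℤ × ℤ)) :
        (ℤ × ℤ) ⧸ Λ)
      = (AddSubgroup.zmultiples ((1, 0) : ℤ × ℤ)).map (QuotientAddGroup.mk' Λ) := by
    rw [AddMonoidHom.map_zmultiples]; rfl
  rw [hmap, AddSubgroup.index_map,
    AddMonoidHom.range_eq_top_of_surjective _ (QuotientAddGroup.mk'_surjective Λ),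
    AddSubgroup.index_top, mul_one, QuotientAddGroup.ker_mk', sup_eq,
    AddSubgroup.index_prod, AddSubgroup.index_top, one_mul, Int.index_zmultiples]
  simp [Int.gcd]
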